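/- arXiv:0807.2153 — 6 statements merged into one kernel-verified Lean document; each statement's English description precedes it below -/
import Mathlib

section
/- Let γ > 0, and let g, p : ℝ^d → [0,∞) be measurable functions with ∫_{ℝ^d} g(x) dx ≤ 1 and ∫_{ℝ^d} p(x) dx = 1. Set A = {x ∈ ℝ^d : g(x) ≥ γ} and assume p(x) > 0 for Lebesgue-almost every x ∈ A. Then ∫_A |log g(x) − log p(x)| · p(x) dx ≤ (2/γ) · sup_{x∈ℝ^d} |g(x) − p(x)|; in particular |∫_A (log g(x) − log p(x)) p(x) dx| ≤ (2/γ) · sup_{x∈ℝ^d} |g(x) − p(x)|. -/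
open MeasureTheory Filter Set

/-- Let `γ > 0` and let `g, p : ℝ^d → [0,∞)` be measurable with
`∫ g ≤ 1` and `∫ p = 1`. Set `A = {x | g x ≥ γ}` and assume `p > 0` Lebesgue-a.e. on `A`.
Then `∫_A |log g − log p| · p ≤ (2/γ) · sup_x |g x − p x|` and in particular
`|∫_A (log g − log p) · p| ≤ (2/γ) · sup_x |g x − p x|`. -/
theorem statement0 (d : ℕ) (γ : ℝ) (hγ : 0 < γ)
    (g p : (Fin d → ℝ) → ℝ)
    (hg_meas : Measurable g) (hp_meas : Measurable p)
    (hg_nonneg : ∀ x, 0 ≤ g x) (hp_nonneg : ∀ x, 0 ≤ p x)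
    (hg_int : Integrable g) (hp_int : Integrable p)
    (hg_le : ∫ x, g x ≤ 1) (hp_one : ∫ x, p x = 1)
    (hbdd : BddAbove (Set.range fun x => |g x - p x|))
    (hpos : ∀ᵐ x ∂(volume.restrict {x | γ ≤ g x}), 0 < p x) :
    (∫ x in {x | γ ≤ g x}, |Real.log (g x) - Real.log (p x)| * p x)
      ≤ (2 / γ) * ⨆ x, |g x - p x| ∧
    |∫ x in {x | γ ≤ g x}, (Real.log (g x) - Real.log (p x)) * p x|
      ≤ (2 / γ) * ⨆ x, |g x - p x| := by
  set A : Set (Fin d → ℝ) := {x | γ ≤ g x} with hA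
  set M : ℝ := ⨆ x, |g x - p x| with hMdef
  have hMle : ∀ x, |g x - p x| ≤ M := fun x => le_ciSup hbdd x
  have hM0 : 0 ≤ M := le_trans (abs_nonneg _) (hMle (fun _ => 0))
  have hMγ0 : 0 ≤ M / γ := div_nonneg hM0 hγ.le
  -- key pointwise bound on A
  have hkey : ∀ x ∈ A, |Real.log (g x) - Real.log (p x)| * p x
      ≤ (M / γ) * (g x + p x) := by
    intro x hx
    have ha : γ ≤ g x := hx
    have ha0 : 0 < g x := lt_of_lt_of_le hγ ha
    have habs : |g x - p x| ≤ M := hMle x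
    rcases eq_or_lt_of_le (hp_nonneg x) with hb0 | hb0
    · rw [← hb0, mul_zero]
      have : 0 ≤ g x + 0 := by linarith
      nlinarith
    · have hMγγ : M / γ * γ = M := div_mul_cancel₀ M hγ.ne'
      rcases le_total (p x) (g x) with hle | hle
      · -- p ≤ g : |log g - log p| = log(g/p) ≤ g/p - 1
        have hlog : Real.log (g x) - Real.log (p x) = Real.log (g x / p x) :=
          (Real.log_div ha0.ne' hb0.ne').symm
        have hlog0 : 0 ≤ Real.log (g x / p x) :=
          Real.log_nonneg ((one_le_div hb0).mpr hle)
        have hlog1 : Real.log (g x / p x) ≤ g x / p x - 1 :=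
          Real.log_le_sub_one_of_pos (div_pos ha0 hb0)
        have h1 : |Real.log (g x) - Real.log (p x)| * p x ≤ (g x / p x - 1) * p x := by
          rw [hlog, abs_of_nonneg hlog0]
          exact mul_le_mul_of_nonneg_right hlog1 hb0.le
        have h2 : (g x / p x - 1) * p x = g x - p x := by field_simp
        have h3 : g x - p x ≤ M := le_trans (le_abs_self _) habs
        have h4 : M ≤ (M / γ) * (g x + p x) := by
          have := mul_le_mul_of_nonneg_left (by linarith : γ ≤ g x + p x) hMγ0
          linarith [hMγγ, this]
        linarith [h1, h2.symm.le]
      · -- g ≤ p : |log g - log p| = log(p/g) ≤ p/g - 1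
        have hlog : Real.log (p x) - Real.log (g x) = Real.log (p x / g x) :=
          (Real.log_div hb0.ne' ha0.ne').symm
        have hmono : Real.log (g x) ≤ Real.log (p x) := Real.log_le_log ha0 hle
        have hlog1 : Real.log (p x / g x) ≤ p x / g x - 1 :=
          Real.log_le_sub_one_of_pos (div_pos hb0 ha0)
        have h1 : |Real.log (g x) - Real.log (p x)| * p x
            ≤ (p x / g x - 1) * p x := by
          rw [abs_of_nonpos (by linarith), neg_sub, hlog]
          exact mul_le_mul_of_nonneg_right hlog1 hb0.le
        have hpg : p x - g x ≤ M :=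
          le_trans (le_trans (le_abs_self _) (abs_sub_comm (p x) (g x)).le) habs
        have h3 : p x / g x - 1 ≤ M / γ := by
          rw [div_sub_one ha0.ne']
          exact div_le_div₀ hM0 hpg hγ ha
        have h4 : (p x / g x - 1) * p x ≤ (M / γ) * p x :=
          mul_le_mul_of_nonneg_right h3 hb0.le
        have h5 : (M / γ) * p x ≤ (M / γ) * (g x + p x) :=
          mul_le_mul_of_nonneg_left (by linarith [ha0.le]) hMγ0
        linarith
  have hAmeas : MeasurableSet A := measurableSet_le measurable_const hg_meas
  -- integral bound
  have hdom_int : Integrable (fun x => (M / γ) * (g x + p x)) :=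
    (hg_int.add hp_int).const_mul _
  have h1 : (∫ x in A, |Real.log (g x) - Real.log (p x)| * p x)
      ≤ ∫ x in A, (M / γ) * (g x + p x) := by
    apply integral_mono_of_nonneg
    · filter_upwards with x using mul_nonneg (abs_nonneg _) (hp_nonneg x)
    · exact hdom_int.restrict
    · filter_upwards [ae_restrict_mem hAmeas] with x hx using hkey x hx
  have h2 : (∫ x in A, (M / γ) * (g x + p x))
      = (M / γ) * ((∫ x in A, g x) + ∫ x in A, p x) := by
    rw [integral_const_mul, integral_add hg_int.restrict hp_int.restrict]
  have h3 : (∫ x in A, g x) ≤ 1 :=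
    le_trans (setIntegral_le_integral hg_int (ae_of_all _ hg_nonneg)) hg_le
  have h4 : (∫ x in A, p x) ≤ 1 :=
    le_of_le_of_eq (setIntegral_le_integral hp_int (ae_of_all _ hp_nonneg)) hp_one
  have hfirst : (∫ x in A, |Real.log (g x) - Real.log (p x)| * p x)
      ≤ (2 / γ) * M := by
    have h5 : (M / γ) * ((∫ x in A, g x) + ∫ x in A, p x) ≤ (M / γ) * 2 :=
      mul_le_mul_of_nonneg_left (by linarith) hMγ0
    calc (∫ x in A, |Real.log (g x) - Real.log (p x)| * p x)
        ≤ (M / γ) * ((∫ x in A, g x) + ∫ x in A, p x) := h2 ▸ h1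
      _ ≤ (M / γ) * 2 := h5
      _ = (2 / γ) * M := by ring
  refine ⟨hfirst, ?_⟩
  calc |∫ x in A, (Real.log (g x) - Real.log (p x)) * p x|
      ≤ ∫ x in A, |Real.log (g x) - Real.log (p x)| * |p x| := by
        simpa using norm_integral_le_integral_norm
          (fun x => (Real.log (g x) - Real.log (p x)) * p x)
            (μ := volume.restrict A)
    _ = ∫ x in A, |Real.log (g x) - Real.log (p x)| * p x := by
        apply integral_congr_ae
        filter_upwards with x
        rw [abs_of_nonneg (hp_nonneg x)]
    _ ≤ (2 / γ) * M := hfirst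
end

section
/- Let γ > 0, let g : ℝ^d → [0,∞) be measurable with ∫_{ℝ^d} g(x) dx ≤ 1, and let p : ℝ^d → ℝ be measurable with sup_{x∈ℝ^d} |g(x) − p(x)| < ∞. Set A = {x ∈ ℝ^d : g(x) ≥ γ}. Then |∫_A (g(x) − p(x)) log g(x) dx| ≤ (1/γ² + 1) · sup_{x∈ℝ^d} |g(x) − p(x)|. -/
open MeasureTheory Filter Set

lemma abs_log_le_aux (γ z : ℝ) (hγ : 0 < γ) (hz : γ ≤ z) :
    |Real.log z| ≤ (1 / γ ^ 2 + 1) * z := by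
  have hz0 : 0 < z := lt_of_lt_of_le hγ hz
  have hγ2 : 0 < γ ^ 2 := by positivity
  rcases le_or_gt 1 z with h1 | h1
  · rw [abs_of_nonneg (Real.log_nonneg h1)]
    have := Real.log_le_sub_one_of_pos hz0
    nlinarith [div_nonneg (zero_le_one' ℝ) hγ2.le]
  · have hlog : Real.log z ≤ 0 := Real.log_nonpos hz0.le h1.le
    rw [abs_of_nonpos hlog]
    have : Real.log z⁻¹ ≤ z⁻¹ - 1 := Real.log_le_sub_one_of_pos (by positivity)
    rw [Real.log_inv] at this
    have hinv : z⁻¹ ≤ z / γ ^ 2 := by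
      rw [inv_le_iff_one_le_mul₀ hz0, div_mul_eq_mul_div, le_div_iff₀ hγ2]
      nlinarith
    have : -Real.log z ≤ z⁻¹ := by linarith
    calc -Real.log z ≤ z / γ ^ 2 := this.trans hinv
      _ ≤ (1 / γ ^ 2 + 1) * z := by
        have : (1 / γ ^ 2 + 1) * z = z / γ ^ 2 + z := by ring
        linarith

/-- Let `γ > 0`, `g : ℝ^d → [0,∞)` measurable with `∫ g ≤ 1`, and
`p : ℝ^d → ℝ` measurable with `sup_x |g x − p x| < ∞`.  With `A = {x | g x ≥ γ}`,
`|∫_A (g − p) log g| ≤ (1/γ² + 1) · sup_x |g x − p x|`. -/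
theorem statement1 (d : ℕ) (γ : ℝ) (hγ : 0 < γ)
    (g p : (Fin d → ℝ) → ℝ)
    (hg_meas : Measurable g) (hp_meas : Measurable p)
    (hg_nonneg : ∀ x, 0 ≤ g x)
    (hg_int : Integrable g) (hg_le : ∫ x, g x ≤ 1)
    (hbdd : BddAbove (Set.range fun x => |g x - p x|)) :
    |∫ x in {x | γ ≤ g x}, (g x - p x) * Real.log (g x)|
      ≤ (1 / γ ^ 2 + 1) * ⨆ x, |g x - p x| := by
  set M := ⨆ x, |g x - p x| with hMdef
  have hM : ∀ x, |g x - p x| ≤ M := fun x => le_ciSup hbdd x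
  have hM0 : 0 ≤ M := le_trans (abs_nonneg _) (hM (fun _ => 0))
  have hC : (0:ℝ) ≤ 1 / γ ^ 2 + 1 := by positivity
  have hA : MeasurableSet {x : Fin d → ℝ | γ ≤ g x} :=
    measurableSet_le measurable_const hg_meas
  have hIntBound : Integrable (fun x => (1 / γ ^ 2 + 1) * M * g x)
      (volume.restrict {x : Fin d → ℝ | γ ≤ g x}) :=
    ((hg_int.const_mul _).restrict)
  have hbound : ∀ᵐ x ∂(volume.restrict {x : Fin d → ℝ | γ ≤ g x}),
      ‖(g x - p x) * Real.log (g x)‖ ≤ (1 / γ ^ 2 + 1) * M * g x := by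
    rw [ae_restrict_iff' hA]
    filter_upwards with x hx
    have hx' : γ ≤ g x := hx
    rw [Real.norm_eq_abs, abs_mul]
    calc |g x - p x| * |Real.log (g x)|
        ≤ M * ((1 / γ ^ 2 + 1) * g x) :=
          mul_le_mul (hM x) (abs_log_le_aux γ (g x) hγ hx') (abs_nonneg _) hM0
      _ = (1 / γ ^ 2 + 1) * M * g x := by ring
  have key := norm_integral_le_of_norm_le hIntBound hbound
  rw [Real.norm_eq_abs] at key
  refine key.trans ?_
  have h1 : ∫ x in {x : Fin d → ℝ | γ ≤ g x}, (1 / γ ^ 2 + 1) * M * g x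
      ≤ ∫ x, (1 / γ ^ 2 + 1) * M * g x := by
    apply setIntegral_le_integral (hg_int.const_mul _)
    filter_upwards with x
    have := hg_nonneg x
    positivity
  refine h1.trans ?_
  rw [integral_const_mul]
  calc (1 / γ ^ 2 + 1) * M * ∫ x, g x ≤ (1 / γ ^ 2 + 1) * M * 1 := by
        apply mul_le_mul_of_nonneg_left hg_le (by positivity)
    _ = (1 / γ ^ 2 + 1) * M := by ring
end

section
/- Let K : ℝ^d → [0,∞) be measurable, bounded, with ∫_{ℝ^d} K(t) dt = 1. Then for every n ≥ 1, every bandwidth 0 < h ≤ 1, every γ > 0, and every realization of the sample such that φ_{n,h}(x) > 0 for Lebesgue-almost every x in A_{n,h} = {x : f_{n,h}(x) ≥ γ}, one has |H^{(1)}_{n,h} − ÊH^{(1)}_{n,h}| ≤ (2/γ + 1/γ² + 1) · sup_{x∈ℝ^d} |f_{n,h}(x) − φ_{n,h}(x)|, where H^{(1)}_{n,h} = −∫_{A_{n,h}} f_{n,h} log f_{n,h} dx and ÊH^{(1)}_{n,h} = −∫_{A_{n,h}} φ_{n,h} log φ_{n,h} dx. -/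
open MeasureTheory Filter Set

/-- The Akaike–Parzen–Rosenblatt kernel density estimator
`f_{n,h}(x) = (nh)⁻¹ ∑_{i<n} K((x − X_i)/h^{1/d})` built from sample points `X`. -/
noncomputable def kde (d : ℕ) (K : (Fin d → ℝ) → ℝ) (X : ℕ → Fin d → ℝ)
    (n : ℕ) (h : ℝ) (x : Fin d → ℝ) : ℝ :=
  ((n : ℝ) * h)⁻¹ * ∑ i ∈ Finset.range n, K (fun j => (x j - X i j) / h ^ ((1 : ℝ) / d))

/-- The mean `φ_{n,h}(x) = E[f_{n,h}(x)]` of the kernel density estimator. -/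
noncomputable def kdeMean {Ω : Type*} [MeasurableSpace Ω] (P : Measure Ω)
    (d : ℕ) (K : (Fin d → ℝ) → ℝ) (X : ℕ → Ω → Fin d → ℝ) (n : ℕ) (h : ℝ)
    (x : Fin d → ℝ) : ℝ :=
  ∫ ω, kde d K (fun i => X i ω) n h x ∂P

/-- The plug-in entropy estimator `H^{(1)} = −∫_{{g ≥ γ}} g log g` for `g = f_{n,h}`. -/
noncomputable def entEst1 (d : ℕ) (γ : ℝ) (g : (Fin d → ℝ) → ℝ) : ℝ :=
  -∫ x in {x | γ ≤ g x}, g x * Real.log (g x)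

/-- The centering `ÊH^{(1)} = −∫_{{g ≥ γ}} p log p` with `p = φ_{n,h}`. -/
noncomputable def entEst1Cent (d : ℕ) (γ : ℝ) (g p : (Fin d → ℝ) → ℝ) : ℝ :=
  -∫ x in {x | γ ≤ g x}, p x * Real.log (p x)


/-- Pointwise inequality: for `γ ≤ a`, `0 < b`, `|a-b| ≤ δ`. -/
lemma key_pointwise {a b γ δ : ℝ} (hγ : 0 < γ) (ha : γ ≤ a) (hb : 0 < b)
    (hab : |a - b| ≤ δ) :
    |a * Real.log a - b * Real.log b| ≤ |a - b| * |1 + Real.log a| + δ / γ * |b - a| := by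
  have ha0 : 0 < a := hγ.trans_le ha
  set R : ℝ := b * (Real.log b - Real.log a) - (b - a) with hRdef
  have hR0 : 0 ≤ R := by
    have h1 : Real.log a - Real.log b ≤ a / b - 1 := by
      rw [← Real.log_div ha0.ne' hb.ne']
      exact Real.log_le_sub_one_of_pos (div_pos ha0 hb)
    have h2 : a / b * b = a := div_mul_cancel₀ a hb.ne'
    nlinarith
  have hRle : R ≤ (b - a) ^ 2 / a := by
    have h1 : Real.log b - Real.log a ≤ b / a - 1 := by
      rw [← Real.log_div hb.ne' ha0.ne']
      exact Real.log_le_sub_one_of_pos (div_pos hb ha0)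
    have h2 : b * (b / a - 1) = (b - a) + (b - a) ^ 2 / a := by
      field_simp; ring
    nlinarith
  have hsq : (b - a) ^ 2 / a ≤ δ / γ * |b - a| := by
    have hba : |b - a| ≤ δ := by rwa [abs_sub_comm]
    have h1 : (b - a) ^ 2 = |b - a| * |b - a| := by
      rw [abs_mul_abs_self]; ring
    have hδ0 : 0 ≤ δ := (abs_nonneg _).trans hab
    have hnum : |b - a| * |b - a| ≤ δ * |b - a| :=
      mul_le_mul_of_nonneg_right hba (abs_nonneg _)
    rw [h1, div_mul_eq_mul_div]
    exact div_le_div₀ (by positivity) hnum hγ ha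
  have hid : a * Real.log a - b * Real.log b = (a - b) * (1 + Real.log a) - R := by
    rw [hRdef]; ring
  calc |a * Real.log a - b * Real.log b| = |(a - b) * (1 + Real.log a) - R| := by rw [hid]
    _ ≤ |(a - b) * (1 + Real.log a)| + |R| := abs_sub _ _
    _ ≤ |a - b| * |1 + Real.log a| + δ / γ * |b - a| := by
        rw [abs_mul, abs_of_nonneg hR0]
        exact add_le_add le_rfl (hRle.trans hsq)

lemma log_factor_bound {a γ : ℝ} (hγ : 0 < γ) (ha : γ ≤ a) :
    |1 + Real.log a| ≤ a + 1 / γ := by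
  have ha0 : 0 < a := hγ.trans_le ha
  have hγi : 0 < 1 / γ := by positivity
  rcases le_or_gt 1 a with h1 | h1
  · have hl : Real.log a ≤ a - 1 := Real.log_le_sub_one_of_pos ha0
    have h0 : 0 ≤ Real.log a := Real.log_nonneg h1
    rw [abs_of_nonneg (by linarith)]; linarith
  · have hlneg : Real.log a < 0 := Real.log_neg ha0 h1
    have hlb : -Real.log a ≤ 1 / a - 1 := by
      have := Real.log_le_sub_one_of_pos (show (0:ℝ) < 1 / a by positivity)
      rw [one_div, Real.log_inv] at this
      rw [one_div]; linarith
    have h1a : 1 / a ≤ 1 / γ := by gcongr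
    have h1a' : 1 < 1 / a := by rw [lt_div_iff₀ ha0]; linarith
    rw [abs_le]; constructor <;> linarith

lemma tlogt_bound {t M : ℝ} (h0 : 0 ≤ t) (hM : t ≤ M) : |t * Real.log t| ≤ 1 + M ^ 2 := by
  rcases eq_or_lt_of_le h0 with rfl | ht
  · simp; positivity
  rcases le_or_gt 1 t with h1 | h1
  · have hl : Real.log t ≤ t - 1 := Real.log_le_sub_one_of_pos ht
    have h0' : 0 ≤ Real.log t := Real.log_nonneg h1
    rw [abs_of_nonneg (by positivity)]
    nlinarith
  · have hlneg : Real.log t < 0 := Real.log_neg ht h1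
    have hlb : -Real.log t ≤ 1 / t - 1 := by
      have := Real.log_le_sub_one_of_pos (show (0:ℝ) < 1 / t by positivity)
      rw [one_div, Real.log_inv] at this
      rw [one_div]; linarith
    have : t * (-Real.log t) ≤ t * (1 / t - 1) := by
      apply mul_le_mul_of_nonneg_left hlb ht.le
    have ht1 : t * (1 / t - 1) = 1 - t := by field_simp
    rw [abs_of_nonpos (by nlinarith), neg_mul_eq_mul_neg] at *
    nlinarith
lemma abstract_bound {α : Type*} [MeasurableSpace α] (μ : Measure α)
    {g p : α → ℝ} {γ δ M : ℝ}
    (hγ : 0 < γ) (hδ : 0 ≤ δ)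
    (hg_meas : Measurable g) (hp_meas : AEStronglyMeasurable p μ)
    (hg_nonneg : ∀ x, 0 ≤ g x) (hp_nonneg : ∀ x, 0 ≤ p x)
    (hgM : ∀ x, g x ≤ M) (hpM : ∀ x, p x ≤ M)
    (hg_int : Integrable g μ) (hg_int1 : ∫ x, g x ∂μ = 1)
    (hpA : ∫ x in {x | γ ≤ g x}, p x ∂μ ≤ 1)
    (hdist : ∀ x, |g x - p x| ≤ δ)
    (hpos : ∀ᵐ x ∂(μ.restrict {x | γ ≤ g x}), 0 < p x) :
    |(∫ x in {x | γ ≤ g x}, g x * Real.log (g x) ∂μ) -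
        ∫ x in {x | γ ≤ g x}, p x * Real.log (p x) ∂μ|
      ≤ (2 / γ + 1 / γ ^ 2 + 1) * δ := by
  set A : Set α := {x | γ ≤ g x} with hA
  have hA_meas : MeasurableSet A := hg_meas measurableSet_Ici
  -- Markov: μ A ≤ ofReal (1/γ)
  have h_lint : ∫⁻ x, ENNReal.ofReal (g x) ∂μ = 1 := by
    rw [← ofReal_integral_eq_lintegral_ofReal hg_int (Eventually.of_forall hg_nonneg),
      hg_int1, ENNReal.ofReal_one]
  have hMarkov : ENNReal.ofReal γ * μ A ≤ 1 := by
    have h1 : ∀ᵐ x ∂μ.restrict A, ENNReal.ofReal γ ≤ ENNReal.ofReal (g x) :=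
      (ae_restrict_mem hA_meas).mono fun x hx => ENNReal.ofReal_le_ofReal hx
    calc ENNReal.ofReal γ * μ A = ∫⁻ _ in A, ENNReal.ofReal γ ∂μ := by
          rw [setLIntegral_const]
      _ ≤ ∫⁻ x in A, ENNReal.ofReal (g x) ∂μ := lintegral_mono_ae h1
      _ ≤ ∫⁻ x, ENNReal.ofReal (g x) ∂μ := setLIntegral_le_lintegral _ _
      _ = 1 := h_lint
  have hμA : μ A ≤ ENNReal.ofReal (1 / γ) := by
    rw [one_div, ENNReal.ofReal_inv_of_pos hγ]
    rw [ENNReal.le_inv_iff_mul_le, mul_comm]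
    exact hMarkov
  have hμA_ne : μ A ≠ ⊤ := (hμA.trans_lt ENNReal.ofReal_lt_top).ne
  haveI : IsFiniteMeasure (μ.restrict A) :=
    ⟨by rwa [Measure.restrict_apply_univ, lt_top_iff_ne_top]⟩
  have hvolA : (μ A).toReal ≤ 1 / γ := by
    have := ENNReal.toReal_mono ENNReal.ofReal_ne_top hμA
    rwa [ENNReal.toReal_ofReal (by positivity)] at this
  -- integrability of bounded functions on A
  have hbdd_int : ∀ {f : α → ℝ} (C : ℝ), AEStronglyMeasurable f (μ.restrict A) →
      (∀ᵐ x ∂(μ.restrict A), |f x| ≤ C) → IntegrableOn f A μ := by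
    intro f C hm hb
    exact Integrable.mono' (integrable_const C) hm (by simpa [Real.norm_eq_abs] using hb)
  have hmemA : ∀ᵐ x ∂(μ.restrict A), γ ≤ g x := ae_restrict_mem hA_meas
  -- the integrands
  have hgl_meas : AEStronglyMeasurable (fun x => g x * Real.log (g x)) μ :=
    (hg_meas.mul (Real.measurable_log.comp hg_meas)).aestronglyMeasurable
  have hpl_meas : AEStronglyMeasurable (fun x => p x * Real.log (p x)) μ :=
    hp_meas.mul (Real.measurable_log.comp_aemeasurable hp_meas.aemeasurable).aestronglyMeasurable
  have Int_gl : IntegrableOn (fun x => g x * Real.log (g x)) A μ :=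
    hbdd_int (1 + M ^ 2) hgl_meas.restrict
      (Eventually.of_forall fun x => tlogt_bound (hg_nonneg x) (hgM x))
  have Int_pl : IntegrableOn (fun x => p x * Real.log (p x)) A μ :=
    hbdd_int (1 + M ^ 2) hpl_meas.restrict
      (Eventually.of_forall fun x => tlogt_bound (hp_nonneg x) (hpM x))
  have Int_g : IntegrableOn g A μ := hg_int.integrableOn
  have Int_p : IntegrableOn p A μ :=
    hbdd_int M hp_meas.restrict
      (Eventually.of_forall fun x => by rw [abs_of_nonneg (hp_nonneg x)]; exact hpM x)
  have IntT2 : IntegrableOn (fun x => δ / γ * |p x - g x|) A μ :=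
    ((Int_p.sub Int_g).abs).const_mul _
  have hT1_meas : AEStronglyMeasurable
      (fun x => |g x - p x| * |1 + Real.log (g x)|) (μ.restrict A) := by
    apply AEStronglyMeasurable.mul
    · simpa [Real.norm_eq_abs] using
        (hg_meas.aestronglyMeasurable.restrict.sub hp_meas.restrict).norm
    · exact ((measurable_const.add (Real.measurable_log.comp hg_meas)).abs).aestronglyMeasurable
  have IntT1 : IntegrableOn (fun x => |g x - p x| * |1 + Real.log (g x)|) A μ := by
    apply hbdd_int (δ * (M + 1 / γ)) hT1_meas
    filter_upwards [hmemA] with x hx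
    have h1 : |1 + Real.log (g x)| ≤ g x + 1 / γ := log_factor_bound hγ hx
    have h2 : g x + 1 / γ ≤ M + 1 / γ := by linarith [hgM x]
    rw [abs_of_nonneg (by positivity)]
    exact mul_le_mul (hdist x) (h1.trans h2) (abs_nonneg _) hδ
  -- pointwise bound a.e. on A
  have keyae : ∀ᵐ x ∂(μ.restrict A),
      |g x * Real.log (g x) - p x * Real.log (p x)|
        ≤ |g x - p x| * |1 + Real.log (g x)| + δ / γ * |p x - g x| := by
    filter_upwards [hmemA, hpos] with x hx hpx
    exact key_pointwise hγ hx hpx (hdist x)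
  -- set integral bounds
  have hAg : ∫ x in A, g x ∂μ ≤ 1 := by
    rw [← hg_int1]
    exact setIntegral_le_integral hg_int (Eventually.of_forall hg_nonneg)
  have hT1_bound : (∫ x in A, |g x - p x| * |1 + Real.log (g x)| ∂μ)
      ≤ δ * (1 + 1 / γ * (1 / γ)) := by
    have hmono : (∫ x in A, |g x - p x| * |1 + Real.log (g x)| ∂μ)
        ≤ ∫ x in A, δ * (g x + 1 / γ) ∂μ := by
      apply integral_mono_ae IntT1 ((Int_g.add (integrableOn_const hμA_ne)).const_mul δ)
      filter_upwards [hmemA] with x hx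
      exact mul_le_mul (hdist x) (log_factor_bound hγ hx) (abs_nonneg _) hδ
    have heq : (∫ x in A, δ * (g x + 1 / γ) ∂μ)
        = δ * ((∫ x in A, g x ∂μ) + (μ A).toReal * (1 / γ)) := by
      rw [integral_const_mul, integral_add Int_g (integrableOn_const hμA_ne),
        setIntegral_const, smul_eq_mul, Measure.real]
    have hγγ : (μ A).toReal * (1 / γ) ≤ 1 / γ * (1 / γ) :=
      mul_le_mul_of_nonneg_right hvolA (by positivity)
    rw [heq] at hmono
    have : δ * ((∫ x in A, g x ∂μ) + (μ A).toReal * (1 / γ)) ≤ δ * (1 + 1 / γ * (1 / γ)) := by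
      apply mul_le_mul_of_nonneg_left (by linarith) hδ
    linarith
  have hT2_bound : (∫ x in A, δ / γ * |p x - g x| ∂μ) ≤ δ / γ * 2 := by
    rw [integral_const_mul]
    apply mul_le_mul_of_nonneg_left _ (by positivity)
    have hmono : (∫ x in A, |p x - g x| ∂μ) ≤ ∫ x in A, (p x + g x) ∂μ := by
      apply integral_mono_ae (Int_p.sub Int_g).abs (Int_p.add Int_g)
      apply Eventually.of_forall
      intro x
      calc |p x - g x| ≤ |p x| + |g x| := abs_sub _ _
        _ = p x + g x := by rw [abs_of_nonneg (hp_nonneg x), abs_of_nonneg (hg_nonneg x)]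
    rw [integral_add Int_p Int_g] at hmono
    linarith
  -- assemble
  calc |(∫ x in A, g x * Real.log (g x) ∂μ) - ∫ x in A, p x * Real.log (p x) ∂μ|
      = |∫ x in A, (g x * Real.log (g x) - p x * Real.log (p x)) ∂μ| := by
        rw [integral_sub Int_gl Int_pl]
    _ ≤ ∫ x in A, |g x * Real.log (g x) - p x * Real.log (p x)| ∂μ := by
        simpa [Real.norm_eq_abs] using norm_integral_le_integral_norm
          (μ := μ.restrict A) (fun x => g x * Real.log (g x) - p x * Real.log (p x))
    _ ≤ ∫ x in A, (|g x - p x| * |1 + Real.log (g x)| + δ / γ * |p x - g x|) ∂μ :=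
        integral_mono_ae (Int_gl.sub Int_pl).abs (IntT1.add IntT2) keyae
    _ = (∫ x in A, |g x - p x| * |1 + Real.log (g x)| ∂μ)
        + ∫ x in A, δ / γ * |p x - g x| ∂μ := integral_add IntT1 IntT2
    _ ≤ δ * (1 + 1 / γ * (1 / γ)) + δ / γ * 2 := add_le_add hT1_bound hT2_bound
    _ = (2 / γ + 1 / γ ^ 2 + 1) * δ := by field_simp; ring
section kdeFacts
variable {d : ℕ} (hd : 1 ≤ d) {K : (Fin d → ℝ) → ℝ} {n : ℕ} {h : ℝ}

lemma kde_eq_smul (K : (Fin d → ℝ) → ℝ) (Y : ℕ → Fin d → ℝ) (n : ℕ) (h : ℝ) (x : Fin d → ℝ) :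
    kde d K Y n h x
      = ((n : ℝ) * h)⁻¹ *
        ∑ i ∈ Finset.range n, K ((h ^ ((1 : ℝ) / d))⁻¹ • (x - Y i)) := by
  unfold kde
  congr 1
  apply Finset.sum_congr rfl
  intro i _
  congr 1
  funext j
  simp [div_eq_inv_mul, Pi.smul_apply, Pi.sub_apply, mul_comm]

lemma rpow_inv_pow (hh0 : 0 < h) (hd : 1 ≤ d) : (h ^ ((1 : ℝ) / d)) ^ d = h := by
  rw [← Real.rpow_natCast (h ^ ((1 : ℝ) / d)) d, ← Real.rpow_mul hh0.le]
  rw [one_div, inv_mul_cancel₀ (Nat.cast_ne_zero.mpr (by omega) : (d : ℝ) ≠ 0)]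
  exact Real.rpow_one h

lemma integrable_K_comp (hK_meas : Measurable K) (hK_int : Integrable K)
    (hh0 : 0 < h) (v : Fin d → ℝ) :
    Integrable (fun x : Fin d → ℝ => K ((h ^ ((1 : ℝ) / d))⁻¹ • (x - v))) := by
  have hc : (0:ℝ) < h ^ ((1 : ℝ) / d) := Real.rpow_pos_of_pos hh0 _
  have h1 : Integrable (fun y : Fin d → ℝ => K ((h ^ ((1 : ℝ) / d))⁻¹ • y)) :=
    hK_int.comp_smul (inv_ne_zero hc.ne')
  exact h1.comp_sub_right v

lemma integral_K_comp (hK_meas : Measurable K) (hK_int : ∫ t, K t = 1)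
    (hh0 : 0 < h) (hd : 1 ≤ d) (v : Fin d → ℝ) :
    ∫ x : Fin d → ℝ, K ((h ^ ((1 : ℝ) / d))⁻¹ • (x - v)) = h := by
  have hc : (0:ℝ) < h ^ ((1 : ℝ) / d) := Real.rpow_pos_of_pos hh0 _
  rw [integral_sub_right_eq_self (fun y => K ((h ^ ((1 : ℝ) / d))⁻¹ • y)) v]
  rw [Measure.integral_comp_inv_smul_of_nonneg volume K hc.le]
  rw [hK_int, smul_eq_mul, mul_one, Module.finrank_fin_fun]
  exact rpow_inv_pow hh0 hd

lemma kde_integrable (hK_meas : Measurable K) (hK_int : Integrable K)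
    (hh0 : 0 < h) (Y : ℕ → Fin d → ℝ) :
    Integrable (kde d K Y n h) := by
  have : Integrable (fun x => ((n : ℝ) * h)⁻¹ *
      ∑ i ∈ Finset.range n, K ((h ^ ((1 : ℝ) / d))⁻¹ • (x - Y i))) :=
    (integrable_finset_sum _ fun i _ => integrable_K_comp hK_meas hK_int hh0 (Y i)).const_mul _
  exact this.congr (Eventually.of_forall fun x => (kde_eq_smul K Y n h x).symm)

lemma kde_integral_one (hK_meas : Measurable K) (hK_int : Integrable K)
    (hK_int1 : ∫ t, K t = 1) (hh0 : 0 < h) (hd : 1 ≤ d) (hn : 1 ≤ n) (Y : ℕ → Fin d → ℝ) :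
    ∫ x, kde d K Y n h x = 1 := by
  have hrw : ∫ x, kde d K Y n h x
      = ∫ x, ((n : ℝ) * h)⁻¹ *
          ∑ i ∈ Finset.range n, K ((h ^ ((1 : ℝ) / d))⁻¹ • (x - Y i)) :=
    integral_congr_ae (Eventually.of_forall fun x => kde_eq_smul K Y n h x)
  rw [hrw, integral_const_mul,
    integral_finset_sum _ fun i _ => integrable_K_comp hK_meas hK_int hh0 (Y i)]
  have : ∀ i ∈ Finset.range n, (∫ x : Fin d → ℝ, K ((h ^ ((1 : ℝ) / d))⁻¹ • (x - Y i))) = h :=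
    fun i _ => integral_K_comp hK_meas hK_int1 hh0 hd (Y i)
  rw [Finset.sum_congr rfl this, Finset.sum_const, Finset.card_range, nsmul_eq_mul]
  have hn' : ((n : ℝ)) ≠ 0 := Nat.cast_ne_zero.mpr (by omega)
  field_simp

end kdeFacts
section assembly
variable {d : ℕ} {K : (Fin d → ℝ) → ℝ} {n : ℕ} {h : ℝ}

lemma kde_nonneg (hK_nonneg : ∀ t, 0 ≤ K t) (hh0 : 0 < h) (Y : ℕ → Fin d → ℝ)
    (x : Fin d → ℝ) : 0 ≤ kde d K Y n h x := by
  unfold kde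
  have h1 : (0:ℝ) ≤ ((n : ℝ) * h)⁻¹ := by positivity
  exact mul_nonneg h1 (Finset.sum_nonneg fun i _ => hK_nonneg _)

lemma kde_le {CK : ℝ} (hCK : ∀ t, K t ≤ CK) (hh0 : 0 < h) (hn : 1 ≤ n)
    (Y : ℕ → Fin d → ℝ) (x : Fin d → ℝ) : kde d K Y n h x ≤ CK / h := by
  unfold kde
  have h1 : (0:ℝ) ≤ ((n : ℝ) * h)⁻¹ := by positivity
  have hsum : ∑ i ∈ Finset.range n, K (fun j => (x j - Y i j) / h ^ ((1 : ℝ) / d))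
      ≤ (n : ℝ) * CK := by
    calc ∑ i ∈ Finset.range n, K (fun j => (x j - Y i j) / h ^ ((1 : ℝ) / d))
        ≤ ∑ _i ∈ Finset.range n, CK := Finset.sum_le_sum fun i _ => hCK _
      _ = (n : ℝ) * CK := by rw [Finset.sum_const, Finset.card_range, nsmul_eq_mul]
  have hn' : ((n : ℝ)) ≠ 0 := Nat.cast_ne_zero.mpr (by omega)
  calc ((n : ℝ) * h)⁻¹ * ∑ i ∈ Finset.range n, K (fun j => (x j - Y i j) / h ^ ((1 : ℝ) / d))
      ≤ ((n : ℝ) * h)⁻¹ * ((n : ℝ) * CK) := mul_le_mul_of_nonneg_left hsum h1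
    _ = CK / h := by field_simp

lemma kde_measurable (hK_meas : Measurable K) (Y : ℕ → Fin d → ℝ) :
    Measurable (kde d K Y n h) := by
  unfold kde
  apply Measurable.const_mul
  apply Finset.measurable_sum
  intro i _
  exact hK_meas.comp (measurable_pi_lambda _ fun j =>
    ((measurable_pi_apply j).sub_const _).div_const _)

lemma kde_joint_measurable {Ω : Type*} [MeasurableSpace Ω] (hK_meas : Measurable K)
    (X : ℕ → Ω → Fin d → ℝ) (hX_meas : ∀ i, Measurable (X i)) :
    Measurable (fun z : Ω × (Fin d → ℝ) => kde d K (fun i => X i z.1) n h z.2) := by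
  unfold kde
  apply Measurable.const_mul
  apply Finset.measurable_sum
  intro i _
  apply hK_meas.comp
  apply measurable_pi_lambda
  intro j
  exact (((measurable_pi_apply j).comp measurable_snd).sub
    (((measurable_pi_apply j).comp (hX_meas i)).comp measurable_fst)).div_const _

end assembly

/-- For a nonnegative, bounded, measurable kernel with `∫K = 1`, for every
`n ≥ 1`, `0 < h ≤ 1`, `γ > 0` and every realization `ω` such that `φ_{n,h} > 0` Lebesgue-a.e.
on `A_{n,h} = {f_{n,h} ≥ γ}`, one has
`|H⁽¹⁾_{n,h} − ÊH⁽¹⁾_{n,h}| ≤ (2/γ + 1/γ² + 1) · sup_x |f_{n,h}(x) − φ_{n,h}(x)|`. -/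
theorem statement2 {Ω : Type*} [MeasurableSpace Ω] (P : Measure Ω) [IsProbabilityMeasure P]
    (d : ℕ) (hd : 1 ≤ d)
    (K : (Fin d → ℝ) → ℝ) (hK_meas : Measurable K) (hK_nonneg : ∀ t, 0 ≤ K t)
    (hK_bdd : BddAbove (Set.range K)) (hK_int : ∫ t, K t = 1)
    (X : ℕ → Ω → Fin d → ℝ) (hX_meas : ∀ i, Measurable (X i))
    (n : ℕ) (hn : 1 ≤ n) (h : ℝ) (hh0 : 0 < h) (hh1 : h ≤ 1)
    (γ : ℝ) (hγ : 0 < γ) (ω : Ω)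
    (hpos : ∀ᵐ x ∂(volume.restrict {x | γ ≤ kde d K (fun i => X i ω) n h x}),
      0 < kdeMean P d K X n h x) :
    |entEst1 d γ (kde d K (fun i => X i ω) n h) -
        entEst1Cent d γ (kde d K (fun i => X i ω) n h) (kdeMean P d K X n h)|
      ≤ (2 / γ + 1 / γ ^ 2 + 1) *
        ⨆ x, |kde d K (fun i => X i ω) n h x - kdeMean P d K X n h x| := by
  have hKint : Integrable K := by
    by_contra hc
    rw [integral_undef hc] at hK_int
    exact one_ne_zero hK_int.symm
  set g : (Fin d → ℝ) → ℝ := kde d K (fun i => X i ω) n h with hgdef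
  set p : (Fin d → ℝ) → ℝ := kdeMean P d K X n h with hpdef
  set CK : ℝ := sSup (Set.range K) with hCKdef
  have hCKt : ∀ t, K t ≤ CK := fun t => le_csSup hK_bdd ⟨t, rfl⟩
  set M : ℝ := CK / h with hMdef
  have hg_meas : Measurable g := kde_measurable hK_meas _
  have hg_nonneg : ∀ x, 0 ≤ g x := kde_nonneg hK_nonneg hh0 _
  have hgM : ∀ x, g x ≤ M := kde_le hCKt hh0 hn _
  have hg_int : Integrable g := kde_integrable hK_meas hKint hh0 _
  have hg_int1 : (∫ x, g x) = 1 := kde_integral_one hK_meas hKint hK_int hh0 hd hn _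
  set F : Ω × (Fin d → ℝ) → ℝ := fun z => kde d K (fun i => X i z.1) n h z.2 with hFdef
  have hF_meas : Measurable F := kde_joint_measurable hK_meas X hX_meas
  have hFx_meas : ∀ x : Fin d → ℝ, Measurable (fun ω' => F (ω', x)) :=
    fun x => hF_meas.comp (measurable_id.prodMk measurable_const)
  have hFx_int : ∀ x : Fin d → ℝ, Integrable (fun ω' => F (ω', x)) P := by
    intro x
    apply Integrable.mono' (integrable_const M) (hFx_meas x).aestronglyMeasurable
    apply Eventually.of_forall
    intro ω'
    rw [Real.norm_eq_abs, abs_of_nonneg (kde_nonneg hK_nonneg hh0 _ _)]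
    exact kde_le hCKt hh0 hn _ _
  have hpx : ∀ x, p x = ∫ ω', F (ω', x) ∂P := fun x => rfl
  have hp_nonneg : ∀ x, 0 ≤ p x := fun x =>
    integral_nonneg fun ω' => kde_nonneg hK_nonneg hh0 _ _
  have hpM : ∀ x, p x ≤ M := by
    intro x
    calc p x ≤ ∫ _ω', M ∂P :=
        integral_mono (hFx_int x) (integrable_const M) fun ω' => kde_le hCKt hh0 hn _ _
      _ = M := by simp
  have hp_meas : AEStronglyMeasurable p volume :=
    (hF_meas.stronglyMeasurable.integral_prod_left').aestronglyMeasurable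
  have hrange : ∀ x, |g x - p x| ≤ M := by
    intro x
    rw [abs_le]
    constructor
    · linarith [hg_nonneg x, hpM x]
    · linarith [hgM x, hp_nonneg x]
  have hbdd : BddAbove (Set.range fun x => |g x - p x|) := by
    refine ⟨M, ?_⟩
    rintro y ⟨x, rfl⟩
    exact hrange x
  set δ : ℝ := ⨆ x, |g x - p x| with hδdef
  have hdist : ∀ x, |g x - p x| ≤ δ := fun x => le_ciSup hbdd x
  have hδ0 : 0 ≤ δ := (abs_nonneg _).trans (hdist 0)
  have hpA : (∫ x in {x | γ ≤ g x}, p x) ≤ 1 := by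
    have heq : (∫ x in {x | γ ≤ g x}, p x)
        = (∫⁻ x in {x | γ ≤ g x}, ENNReal.ofReal (p x)).toReal :=
      integral_eq_lintegral_of_nonneg_ae (Eventually.of_forall hp_nonneg) hp_meas.restrict
    have hle : (∫⁻ x in {x | γ ≤ g x}, ENNReal.ofReal (p x)) ≤ 1 := by
      calc ∫⁻ x in {x | γ ≤ g x}, ENNReal.ofReal (p x)
          ≤ ∫⁻ x, ENNReal.ofReal (p x) := setLIntegral_le_lintegral _ _
        _ = ∫⁻ x, ∫⁻ ω', ENNReal.ofReal (F (ω', x)) ∂P := by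
            apply lintegral_congr
            intro x
            rw [hpx x, ofReal_integral_eq_lintegral_ofReal (hFx_int x)
              (Eventually.of_forall fun ω' => kde_nonneg hK_nonneg hh0 _ _)]
        _ = ∫⁻ ω', ∫⁻ x, ENNReal.ofReal (F (ω', x)) ∂volume ∂P := by
            apply lintegral_lintegral_swap
            exact (ENNReal.measurable_ofReal.comp (hF_meas.comp measurable_swap)).aemeasurable
        _ = ∫⁻ _ω', 1 ∂P := by
            apply lintegral_congr
            intro ω'
            rw [← ofReal_integral_eq_lintegral_ofReal
              (kde_integrable hK_meas hKint hh0 (fun i => X i ω'))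
              (Eventually.of_forall fun y => kde_nonneg hK_nonneg hh0 _ _),
              kde_integral_one hK_meas hKint hK_int hh0 hd hn (fun i => X i ω'),
              ENNReal.ofReal_one]
        _ = 1 := by simp
    rw [heq]
    exact ENNReal.toReal_le_of_le_ofReal zero_le_one (by simpa using hle)
  have hmain := abstract_bound volume hγ hδ0 hg_meas hp_meas hg_nonneg hp_nonneg hgM hpM
    hg_int hg_int1 hpA hdist hpos
  unfold entEst1 entEst1Cent
  rw [neg_sub_neg, abs_sub_comm]
  exact hmain
end

section
/- Let f : ℝ^d → [0,∞) be Lebesgue-integrable, let (g_n)_{n≥1} be measurable functions ℝ^d → ℝ with ∫_{ℝ^d} |g_n(x) − f(x)| dx → 0, and let (γ_n)_{n≥1} be positive reals with γ_n → 0. Then ∫_{{x : g_n(x) < γ_n}} f(x) dx → 0 as n → ∞. -/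
open MeasureTheory Filter Set

/-- If `f : ℝ^d → [0,∞)` is Lebesgue-integrable, `gₙ` are measurable with
`∫ |gₙ − f| → 0`, and `γₙ > 0` with `γₙ → 0`, then `∫_{{gₙ < γₙ}} f → 0`. -/
theorem statement5 (d : ℕ) (f : (Fin d → ℝ) → ℝ) (hf_meas : Measurable f)
    (hf_nonneg : ∀ x, 0 ≤ f x) (hf_int : Integrable f)
    (g : ℕ → (Fin d → ℝ) → ℝ) (hg_meas : ∀ n, Measurable (g n))
    (hg_int : ∀ n, Integrable (g n))
    (hL1 : Tendsto (fun n => ∫ x, |g n x - f x|) atTop (nhds 0))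
    (γ : ℕ → ℝ) (hγ_pos : ∀ n, 0 < γ n) (hγ_lim : Tendsto γ atTop (nhds 0)) :
    Tendsto (fun n => ∫ x in {x | g n x < γ n}, f x) atTop (nhds 0) := by
  have habs : ∀ n, Integrable (fun x => |g n x - f x|) := fun n =>
    ((hg_int n).sub hf_int).abs
  have hmeasA : ∀ n, MeasurableSet {x | g n x < γ n} := fun n =>
    measurableSet_lt (hg_meas n) measurable_const
  have hmeasB : ∀ n, MeasurableSet {x | f x ≤ 2 * γ n} := fun n =>
    measurableSet_le hf_meas measurable_const
  have hTind : ∀ n, Integrable (({x | f x ≤ 2 * γ n}).indicator f) := fun n =>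
    hf_int.indicator (hmeasB n)
  -- key pointwise/integral bound
  have key : ∀ n, ∫ x in {x | g n x < γ n}, f x ≤
      (∫ x, ({x | f x ≤ 2 * γ n}).indicator f x) + 2 * ∫ x, |g n x - f x| := by
    intro n
    rw [← integral_indicator (hmeasA n)]
    have hle : ∀ x, ({x | g n x < γ n}).indicator f x ≤
        ({x | f x ≤ 2 * γ n}).indicator f x + 2 * |g n x - f x| := by
      intro x
      have h3 : f x - g n x ≤ |g n x - f x| := by
        rw [abs_sub_comm]; exact le_abs_self _
      simp only [indicator_apply, mem_setOf_eq]
      split_ifs with h1 h2 h2 <;>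
        [nlinarith [abs_nonneg (g n x - f x)];
         nlinarith [hγ_pos n, not_le.mp h2];
         nlinarith [abs_nonneg (g n x - f x), hf_nonneg x];
         nlinarith [abs_nonneg (g n x - f x)]]
    have hint2 : Integrable (fun x => ({x | f x ≤ 2 * γ n}).indicator f x
        + 2 * |g n x - f x|) := (hTind n).add ((habs n).const_mul 2)
    have hint1 : Integrable (({x | g n x < γ n}).indicator f) :=
      hf_int.indicator (hmeasA n)
    calc ∫ x, ({x | g n x < γ n}).indicator f x
        ≤ ∫ x, (({x | f x ≤ 2 * γ n}).indicator f x + 2 * |g n x - f x|) :=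
          integral_mono hint1 hint2 hle
      _ = (∫ x, ({x | f x ≤ 2 * γ n}).indicator f x) + 2 * ∫ x, |g n x - f x| := by
          rw [integral_add (hTind n) ((habs n).const_mul 2), integral_const_mul]
  -- first term tends to 0 by dominated convergence
  have hT1 : Tendsto (fun n => ∫ x, ({x | f x ≤ 2 * γ n}).indicator f x) atTop
      (nhds 0) := by
    have := tendsto_integral_of_dominated_convergence (F := fun n =>
        ({x | f x ≤ 2 * γ n}).indicator f) (f := fun _ => (0 : ℝ)) (bound := f)
      (fun n => ((hf_meas.indicator (hmeasB n)).aestronglyMeasurable))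
      hf_int
      (fun n => Eventually.of_forall fun x => by
        simp only [Real.norm_eq_abs, indicator_apply, mem_setOf_eq]
        split_ifs with h
        · exact le_of_eq (abs_of_nonneg (hf_nonneg x))
        · simpa using hf_nonneg x)
      (Eventually.of_forall fun x => by
        rcases eq_or_lt_of_le (hf_nonneg x) with hfx | hfx
        · have : ∀ n, ({x | f x ≤ 2 * γ n}).indicator f x = 0 := by
            intro n
            simp only [indicator_apply, mem_setOf_eq]
            split_ifs <;> simp [← hfx]
          simpa [this] using (tendsto_const_nhds : Tendsto (fun _ : ℕ => (0:ℝ)) atTop (nhds 0))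
        · have hev : ∀ᶠ n in atTop, γ n < f x / 2 :=
            hγ_lim.eventually (eventually_lt_nhds (by linarith : (0:ℝ) < f x / 2))
          refine Tendsto.congr' (hev.mono fun n hn => ?_) tendsto_const_nhds
          simp only [indicator_apply, mem_setOf_eq, if_neg (by linarith : ¬ f x ≤ 2 * γ n)])
    simpa using this
  have hT2 : Tendsto (fun n => 2 * ∫ x, |g n x - f x|) atTop (nhds 0) := by
    simpa using hL1.const_mul 2
  have hsum : Tendsto (fun n => (∫ x, ({x | f x ≤ 2 * γ n}).indicator f x)
      + 2 * ∫ x, |g n x - f x|) atTop (nhds 0) := by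
    simpa using hT1.add hT2
  exact tendsto_of_tendsto_of_tendsto_of_le_of_le tendsto_const_nhds hsum
    (fun n => setIntegral_nonneg (hmeasA n) fun x _ => hf_nonneg x) key
end

section
/- Let s ≥ 1 and let f : ℝ^d → ℝ be s-times continuously differentiable with compact support, all of whose partial derivatives of total order s are bounded in absolute value by a constant M < ∞. Let K : ℝ^d → ℝ be integrable with ∫_{ℝ^d} K(t) dt = 1, ∫_{ℝ^d} t_1^{j_1}⋯t_d^{j_d} K(t) dt = 0 for all nonnegative integers j_1,…,j_d with 1 ≤ j_1+⋯+j_d ≤ s−1, and ∫_{ℝ^d} |t_1^{j_1}⋯t_d^{j_d}| |K(t)| dt < ∞ for all j_1+⋯+j_d = s. Then there is a constant C < ∞ such that for all 0 < h ≤ 1, sup_{x∈ℝ^d} |∫_{ℝ^d} K(t) f(x − h^{1/d} t) dt − f(x)| ≤ C h^{s/d}. -/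
open MeasureTheory Filter Set
open scoped Nat


private lemma itfd_comp_const_add {E F : Type*} [NormedAddCommGroup E] [NormedSpace ℝ E]
    [NormedAddCommGroup F] [NormedSpace ℝ F] {f : E → F} {N : ℕ∞} (hf : ContDiff ℝ N f)
    (c : E) : ∀ (n : ℕ), (n : ℕ∞) ≤ N → ∀ x,
      iteratedFDeriv ℝ n (fun y => f (c + y)) x = iteratedFDeriv ℝ n f (c + x) := by
  intro n
  induction n with
  | zero => intro _ x; ext m; simp
  | succ n IH =>
    intro hn x
    have hn' : (n : ℕ∞) ≤ N := le_trans (by exact_mod_cast Nat.le_succ n) hn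
    have hlt : (n : ℕ∞) < N := lt_of_lt_of_le (by exact_mod_cast Nat.lt_succ_self n) hn
    have hdiff := hf.differentiable_iteratedFDeriv (by exact_mod_cast hlt)
    have h1 : iteratedFDeriv ℝ n (fun y => f (c + y)) = fun z => iteratedFDeriv ℝ n f (c + z) :=
      funext (IH hn')
    ext m
    rw [iteratedFDeriv_succ_apply_left, iteratedFDeriv_succ_apply_left, h1]
    have h2 : HasFDerivAt (fun z => iteratedFDeriv ℝ n f (c + z))
        (fderiv ℝ (iteratedFDeriv ℝ n f) (c + x)) x := by
      simpa [Function.comp_def] using ((hdiff (c + x)).hasFDerivAt.comp x ((hasFDerivAt_id x).const_add c))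
    rw [h2.fderiv]

private lemma iteratedDeriv_line {d : ℕ} {f : (Fin d → ℝ) → ℝ} {N : ℕ∞} (hf : ContDiff ℝ N f)
    (x v : Fin d → ℝ) {k : ℕ} (hk : (k : ℕ∞) ≤ N) (u : ℝ) :
    iteratedDeriv k (fun u : ℝ => f (x + u • v)) u
      = iteratedFDeriv ℝ k f (x + u • v) (fun _ => v) := by
  have hfx : ContDiff ℝ N (fun y => f (x + y)) := hf.comp (contDiff_const.add contDiff_id)
  have hL : (fun u : ℝ => f (x + u • v))
      = (fun y => f (x + y)) ∘ (ContinuousLinearMap.toSpanSingleton ℝ v) := by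
    funext u; simp [ContinuousLinearMap.toSpanSingleton_apply]
  rw [iteratedDeriv_eq_iteratedFDeriv, hL,
    ContinuousLinearMap.iteratedFDeriv_comp_right _ hfx _ (by exact_mod_cast hk)]
  have h3 := itfd_comp_const_add hf x k hk (u • v)
  simp [ContinuousMultilinearMap.compContinuousLinearMap_apply,
    ContinuousLinearMap.toSpanSingleton_apply, h3]

private lemma iteratedDerivWithin_Icc_eq {ψ : ℝ → ℝ} {N : ℕ∞} (hψ : ContDiff ℝ N ψ) {k : ℕ}
    (hk : (k : ℕ∞) ≤ N) {y : ℝ} (hy : y ∈ Icc (0:ℝ) 1) :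
    iteratedDerivWithin k ψ (Icc 0 1) y = iteratedDeriv k ψ y := by
  rw [iteratedDerivWithin_eq_iteratedFDerivWithin, iteratedDeriv_eq_iteratedFDeriv]
  congr 1
  have h := ((contDiff_iff_ftaylorSeries.mp hψ).hasFTaylorSeriesUpToOn
    (Icc 0 1)).eq_iteratedFDerivWithin_of_uniqueDiffOn (by exact_mod_cast hk) uniqueDiffOn_Icc_zero_one hy
  exact h.symm

private lemma multilin_expand {d k : ℕ}
    (P : ContinuousMultilinearMap ℝ (fun _ : Fin k => (Fin d → ℝ)) ℝ) (t : Fin d → ℝ) :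
    P (fun _ => t) = ∑ r : Fin k → Fin d,
      (∏ i : Fin k, t (r i)) * P (fun i => Pi.single (r i) (1:ℝ)) := by
  classical
  have ht : (fun _ : Fin k => t) = fun _ : Fin k => ∑ j, t j • (Pi.single j (1:ℝ) : Fin d → ℝ) := by
    funext _
    funext j'
    simp [Pi.single_apply, Finset.sum_apply, mul_ite, eq_comm]
  rw [ht, P.map_sum]
  refine Finset.sum_congr rfl fun r _ => ?_
  rw [P.map_smul_univ]
  simp [smul_eq_mul]

private lemma prod_comp_eq_prod_pow {d k : ℕ} (r : Fin k → Fin d) (t : Fin d → ℝ) :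
    ∏ i : Fin k, t (r i)
      = ∏ j : Fin d, t j ^ (Finset.univ.filter (fun i => r i = j)).card := by
  classical
  rw [← Finset.prod_fiberwise_of_maps_to (fun i (_ : i ∈ Finset.univ) => Finset.mem_univ (r i))
    (fun i => t (r i))]
  refine Finset.prod_congr rfl fun j _ => ?_
  rw [Finset.prod_congr rfl (fun i hi => by rw [(Finset.mem_filter.mp hi).2]),
    Finset.prod_const]

private lemma sum_card_fiber {d k : ℕ} (r : Fin k → Fin d) :
    ∑ j : Fin d, (Finset.univ.filter (fun i => r i = j)).card = k := by
  classical
  have h := Finset.sum_fiberwise_of_maps_to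
    (fun i (_ : i ∈ Finset.univ) => Finset.mem_univ (r i)) (fun _ : Fin k => (1 : ℕ))
  simpa [Finset.sum_const, Finset.card_univ] using h

private lemma myNormPowLe {d s : ℕ} (hd : 0 < d) (t : Fin d → ℝ) :
    ‖t‖ ^ s ≤ 1 + ∑ j, |t j| ^ s := by
  have hpos : 0 ≤ ∑ j, |t j| ^ s := Finset.sum_nonneg fun j _ => pow_nonneg (abs_nonneg _) _
  rcases le_total ‖t‖ 1 with h | h
  · have : ‖t‖ ^ s ≤ 1 := pow_le_one₀ (norm_nonneg t) h
    linarith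
  · haveI : Nonempty (Fin d) := Fin.pos_iff_nonempty.mp hd
    obtain ⟨i, _, hi⟩ := Finset.exists_mem_eq_sup (Finset.univ : Finset (Fin d))
      Finset.univ_nonempty (fun j => ‖t j‖₊)
    have hnorm : ‖t‖ = |t i| := by
      rw [Pi.norm_def, hi]
      simp [Real.norm_eq_abs]
    have h2 : ‖t‖ ^ s ≤ ∑ j, |t j| ^ s := by
      rw [hnorm]
      exact Finset.single_le_sum (f := fun j => |t j| ^ s) (fun j _ => pow_nonneg (abs_nonneg _) _) (Finset.mem_univ i)
    linarith

private lemma monomial_le {d s : ℕ} (hd : 0 < d) (m : Fin d → ℕ) (hm : ∑ j, m j ≤ s)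
    (t : Fin d → ℝ) : (∏ j, |t j| ^ m j) ≤ 1 + ∑ j, |t j| ^ s := by
  have h1N : (1:ℝ) ≤ max 1 ‖t‖ := le_max_left _ _
  have hb : ∀ j, |t j| ≤ max 1 ‖t‖ := fun j =>
    le_trans (by simpa [Real.norm_eq_abs] using norm_le_pi_norm t j) (le_max_right _ _)
  have hlast : (max 1 ‖t‖) ^ s ≤ 1 + ∑ j, |t j| ^ s := by
    rcases max_cases 1 ‖t‖ with ⟨hEq, _⟩ | ⟨hEq, _⟩
    · rw [hEq]
      have : 0 ≤ ∑ j, |t j| ^ s := Finset.sum_nonneg fun j _ => pow_nonneg (abs_nonneg _) _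
      simpa using by linarith
    · rw [hEq]; exact myNormPowLe hd t
  calc (∏ j, |t j| ^ m j) ≤ ∏ j, (max 1 ‖t‖) ^ m j :=
        Finset.prod_le_prod (fun j _ => pow_nonneg (abs_nonneg _) _)
          (fun j _ => pow_le_pow_left₀ (abs_nonneg _) (hb j) _)
    _ = (max 1 ‖t‖) ^ (∑ j, m j) := Finset.prod_pow_eq_pow_sum _ _ _
    _ ≤ (max 1 ‖t‖) ^ s := pow_le_pow_right₀ h1N hm
    _ ≤ 1 + ∑ j, |t j| ^ s := hlast

/-- (Bias bound, equation (17) of the paper.) If `f` is `s`-times continuously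
differentiable with compact support and order-`s` partials bounded by `M`, and the kernel `K`
is integrable with `∫K = 1`, vanishing moments of total orders `1,…,s−1`, and finite absolute
moments of total order `s`, then for some `C < ∞` and all `0 < h ≤ 1`,
`sup_x |∫ K(t) f(x − h^{1/d} t) dt − f(x)| ≤ C h^{s/d}`. -/
theorem statement7 (d s : ℕ) (hd : 1 ≤ d) (hs : 1 ≤ s)
    (f : (Fin d → ℝ) → ℝ) (hf_smooth : ContDiff ℝ (s : ℕ∞) f)
    (hf_supp : HasCompactSupport f)
    (M : ℝ) (hM : ∀ x, ‖iteratedFDeriv ℝ s f x‖ ≤ M)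
    (K : (Fin d → ℝ) → ℝ) (hK_int : Integrable K) (hK_one : ∫ t, K t = 1)
    (hK_mom0 : ∀ j : Fin d → ℕ, 1 ≤ ∑ k, j k → ∑ k, j k ≤ s - 1 →
      ∫ t, (∏ k, (t k) ^ (j k)) * K t = 0)
    (hK_moms : ∀ j : Fin d → ℕ, ∑ k, j k = s →
      Integrable (fun t => (∏ k, |t k| ^ (j k)) * |K t|)) :
    ∃ C : ℝ, ∀ h : ℝ, 0 < h → h ≤ 1 → ∀ x : Fin d → ℝ,
      |(∫ t, K t * f (x - h ^ ((1 : ℝ) / d) • t)) - f x| ≤ C * h ^ ((s : ℝ) / d) := by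
  classical
  haveI : Nonempty (Fin d) := Fin.pos_iff_nonempty.mp hd
  obtain ⟨n, hsn⟩ : ∃ n, s = n + 1 := ⟨s - 1, (Nat.succ_pred_eq_of_pos hs).symm⟩
  subst hsn
  -- dominating function
  set g : (Fin d → ℝ) → ℝ := fun t => (1 + ∑ j, |t j| ^ (n+1)) * |K t| with hg
  have hg_nonneg : ∀ t, 0 ≤ g t := fun t =>
    mul_nonneg (by positivity) (abs_nonneg _)
  have hg_int : Integrable g := by
    have h2 : ∀ j : Fin d, Integrable (fun t : Fin d → ℝ => |t j| ^ (n+1) * |K t|) := by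
      intro j
      have hmom := hK_moms (Pi.single j (n+1)) (by simp)
      have hprod : ∀ t : Fin d → ℝ,
          (∏ k, |t k| ^ ((Pi.single j (n+1) : Fin d → ℕ) k)) = |t j| ^ (n+1) := by
        intro t
        rw [Finset.prod_eq_single j (fun k _ hk => by simp [Pi.single_eq_of_ne hk])
          (fun h => absurd (Finset.mem_univ j) h)]
        simp
      simpa [hprod] using hmom
    have hsum : Integrable (fun t : Fin d → ℝ => |K t| + ∑ j, |t j| ^ (n+1) * |K t|) :=
      hK_int.abs.add (integrable_finset_sum _ fun j _ => h2 j)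
    have hfun : g = fun t => |K t| + ∑ j, |t j| ^ (n+1) * |K t| := by
      funext t; simp only [hg]; rw [add_mul, one_mul, Finset.sum_mul]
    rw [hfun]; exact hsum
  -- integrability of monomials against K
  have hmonoInt : ∀ m : Fin d → ℕ, (∑ j, m j) ≤ n + 1 →
      Integrable (fun t : Fin d → ℝ => (∏ j, t j ^ m j) * K t) := by
    intro m hm
    have hmeas : AEStronglyMeasurable (fun t : Fin d → ℝ => (∏ j, t j ^ m j) * K t) volume :=
      ((continuous_finset_prod _ fun j _ =>
        (continuous_apply j).pow _).aestronglyMeasurable).mul hK_int.1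
    refine hg_int.mono hmeas (ae_of_all _ fun t => ?_)
    rw [Real.norm_eq_abs, Real.norm_eq_abs, abs_of_nonneg (hg_nonneg t), abs_mul]
    calc |∏ j, t j ^ m j| * |K t| = (∏ j, |t j| ^ m j) * |K t| := by
          rw [Finset.abs_prod]; simp_rw [abs_pow]
      _ ≤ (1 + ∑ j, |t j| ^ (n+1)) * |K t| :=
          mul_le_mul_of_nonneg_right (monomial_le hd m hm t) (abs_nonneg _)
  have hM0 : 0 ≤ M := le_trans (norm_nonneg _) (hM 0)
  -- Taylor bound
  have htaylor : ∀ y v : Fin d → ℝ,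
      ‖f (y + v) - ∑ k ∈ Finset.range (n+1),
        (k ! : ℝ)⁻¹ * iteratedFDeriv ℝ k f y (fun _ => v)‖
        ≤ M / n ! * ‖v‖ ^ (n+1) := by
    intro y v
    have hφ : ContDiff ℝ (((n+1 : ℕ) : ℕ∞)) (fun u : ℝ => f (y + u • v)) :=
      hf_smooth.comp (contDiff_const.add (contDiff_id.smul contDiff_const))
    have hderiv : ∀ k : ℕ, (k : ℕ∞) ≤ ((n+1 : ℕ) : ℕ∞) → ∀ u ∈ Icc (0:ℝ) 1,
        iteratedDerivWithin k (fun u : ℝ => f (y + u • v)) (Icc 0 1) u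
          = iteratedFDeriv ℝ k f (y + u • v) (fun _ => v) := by
      intro k hk u hu
      rw [iteratedDerivWithin_Icc_eq hφ hk hu, iteratedDeriv_line hf_smooth y v hk u]
    have hCb : ∀ u ∈ Icc (0:ℝ) 1,
        ‖iteratedDerivWithin (n+1) (fun u : ℝ => f (y + u • v)) (Icc 0 1) u‖
          ≤ M * ‖v‖ ^ (n+1) := by
      intro u hu
      rw [hderiv (n+1) le_rfl u hu]
      calc ‖iteratedFDeriv ℝ (n+1) f (y + u • v) (fun _ => v)‖
          ≤ M * ∏ _i : Fin (n+1), ‖v‖ :=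
            ContinuousMultilinearMap.le_of_opNorm_le (hM _) _
        _ = M * ‖v‖ ^ (n+1) := by
            rw [Finset.prod_const, Finset.card_univ, Fintype.card_fin]
    have hb := taylor_mean_remainder_bound (f := fun u : ℝ => f (y + u • v))
      (zero_le_one) (by exact_mod_cast hφ.contDiffOn)
      (right_mem_Icc.mpr zero_le_one) hCb
    have htE : taylorWithinEval (fun u : ℝ => f (y + u • v)) n (Icc (0:ℝ) 1) 0 1
        = ∑ k ∈ Finset.range (n+1),
            (k ! : ℝ)⁻¹ * iteratedFDeriv ℝ k f y (fun _ => v) := by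
      rw [taylor_within_apply]
      refine Finset.sum_congr rfl fun k hk => ?_
      have hk' : (k : ℕ∞) ≤ ((n+1 : ℕ) : ℕ∞) := by
        exact_mod_cast (Finset.mem_range.mp hk).le
      rw [hderiv k hk' 0 (left_mem_Icc.mpr zero_le_one)]
      simp [smul_eq_mul]
    simp only [one_smul] at hb
    rw [htE] at hb
    calc ‖f (y + v) - ∑ k ∈ Finset.range (n+1),
          (k ! : ℝ)⁻¹ * iteratedFDeriv ℝ k f y (fun _ => v)‖
        ≤ M * ‖v‖ ^ (n+1) * (1 - 0) ^ (n+1) / n ! := hb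
      _ = M / n ! * ‖v‖ ^ (n+1) := by ring
  -- the constant
  refine ⟨M / n ! * ∫ t, g t, ?_⟩
  intro h hh hh1 x
  set ε : ℝ := h ^ ((1:ℝ)/d) with hε
  have hε0 : 0 < ε := Real.rpow_pos_of_pos hh _
  have hεpow : ε ^ (n+1) = h ^ (((n+1 : ℕ) : ℝ)/d) := by
    rw [hε, ← Real.rpow_natCast (h ^ ((1:ℝ)/(d:ℝ))) (n+1), ← Real.rpow_mul hh.le]
    congr 1
    push_cast
    ring
  set P : (Fin d → ℝ) → ℝ := fun t => ∑ k ∈ Finset.range (n+1),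
    (k ! : ℝ)⁻¹ * iteratedFDeriv ℝ k f x (fun _ => (-ε) • t) with hP
  have hsub : ∀ t : Fin d → ℝ, x - ε • t = x + (-ε) • t := by
    intro t; rw [sub_eq_add_neg, neg_smul]
  -- expansion of K * P into monomials
  have hsplit : (fun t => K t * P t) = fun t => ∑ k ∈ Finset.range (n+1),
      ∑ r : Fin k → Fin d,
        ((k ! : ℝ)⁻¹ * (-ε)^k * iteratedFDeriv ℝ k f x (fun i => Pi.single (r i) (1:ℝ)))
          * ((∏ j, t j ^ (Finset.univ.filter (fun i => r i = j)).card) * K t) := by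
    funext t
    rw [hP]
    rw [Finset.mul_sum]
    refine Finset.sum_congr rfl fun k _ => ?_
    have h1 : iteratedFDeriv ℝ k f x (fun _ => (-ε) • t)
        = (-ε)^k * iteratedFDeriv ℝ k f x (fun _ => t) := by
      have hsm := (iteratedFDeriv ℝ k f x).map_smul_univ (fun _ => -ε) (fun _ => t)
      simpa [Finset.prod_const, Finset.card_univ, smul_eq_mul] using hsm
    rw [h1, multilin_expand (iteratedFDeriv ℝ k f x) t]
    simp only [Finset.mul_sum]
    refine Finset.sum_congr rfl fun r _ => ?_
    rw [← prod_comp_eq_prod_pow r t]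
    ring
  have hdeg : ∀ k ∈ Finset.range (n+1), ∀ r : Fin k → Fin d,
      ∑ j, (Finset.univ.filter (fun i => r i = j)).card ≤ n + 1 := by
    intro k hk r
    rw [sum_card_fiber r]
    exact (Finset.mem_range.mp hk).le
  have hterm : ∀ k ∈ Finset.range (n+1), ∀ r : Fin k → Fin d,
      Integrable (fun t : Fin d → ℝ =>
        ((k ! : ℝ)⁻¹ * (-ε)^k * iteratedFDeriv ℝ k f x (fun i => Pi.single (r i) (1:ℝ)))
          * ((∏ j, t j ^ (Finset.univ.filter (fun i => r i = j)).card) * K t)) := by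
    intro k hk r
    exact (hmonoInt _ (hdeg k hk r)).const_mul _
  have hPint : Integrable (fun t => K t * P t) := by
    rw [hsplit]
    exact integrable_finset_sum _ fun k hk => integrable_finset_sum _ fun r _ => hterm k hk r
  -- value of ∫ K * P
  have hPval : ∫ t, K t * P t = f x := by
    rw [hsplit, integral_finset_sum _ (fun k hk =>
      integrable_finset_sum _ fun r _ => hterm k hk r)]
    have heval : ∀ k ∈ Finset.range (n+1),
        (∫ t, ∑ r : Fin k → Fin d,
          ((k ! : ℝ)⁻¹ * (-ε)^k * iteratedFDeriv ℝ k f x (fun i => Pi.single (r i) (1:ℝ)))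
            * ((∏ j, t j ^ (Finset.univ.filter (fun i => r i = j)).card) * K t))
        = if k = 0 then f x else 0 := by
      intro k hk
      rw [integral_finset_sum _ fun r _ => hterm k hk r]
      rcases Nat.eq_zero_or_pos k with hk0 | hk0
      · subst hk0
        simp only [if_pos rfl]
        simp [Finset.univ_eq_empty, integral_const_mul, hK_one]
      · rw [if_neg (Nat.pos_iff_ne_zero.mp hk0)]
        refine Finset.sum_eq_zero fun r _ => ?_
        rw [integral_const_mul]
        have hz := hK_mom0 (fun j => (Finset.univ.filter (fun i => r i = j)).card)
          (by rw [sum_card_fiber r]; exact hk0)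
          (by rw [sum_card_fiber r]; simpa using Nat.le_of_lt_succ (Finset.mem_range.mp hk))
        rw [hz, mul_zero]
    rw [Finset.sum_congr rfl heval]
    simp
  -- integrability of K * f-term
  have hKf : Integrable (fun t => K t * f (x - ε • t)) := by
    obtain ⟨Cf, hCf⟩ := hf_smooth.continuous.bounded_above_of_compact_support hf_supp
    have hco : (fun t : Fin d → ℝ => K t * f (x - ε • t))
        = fun t => f (x - ε • t) * K t := by funext t; ring
    rw [hco]
    refine Integrable.bdd_mul (c := Cf) hK_int ?_ (ae_of_all _ fun t => hCf _)
    exact (hf_smooth.continuous.comp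
      (continuous_const.sub (continuous_id.const_smul ε))).aestronglyMeasurable
  -- main computation
  have key : (∫ t, K t * f (x - ε • t)) - f x = ∫ t, K t * (f (x - ε • t) - P t) := by
    have hco : (fun t => K t * (f (x - ε • t) - P t))
        = fun t => K t * f (x - ε • t) - K t * P t := by funext t; ring
    rw [hco, integral_sub hKf hPint, hPval]
  rw [key]
  have hbound : ∀ t, ‖K t * (f (x - ε • t) - P t)‖ ≤ M / n ! * ε^(n+1) * g t := by
    intro t
    have h1 : ‖f (x - ε • t) - P t‖ ≤ M / n ! * ‖(-ε) • t‖ ^ (n+1) := by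
      rw [hsub t, hP]
      exact htaylor x ((-ε) • t)
    have h2 : ‖(-ε) • t‖ ^ (n+1) = ε^(n+1) * ‖t‖^(n+1) := by
      rw [norm_smul, mul_pow, Real.norm_eq_abs, abs_neg, abs_of_pos hε0]
    calc ‖K t * (f (x - ε • t) - P t)‖ = |K t| * ‖f (x - ε • t) - P t‖ := by
          rw [Real.norm_eq_abs, abs_mul, Real.norm_eq_abs]
      _ ≤ |K t| * (M / n ! * ‖(-ε) • t‖ ^ (n+1)) :=
          mul_le_mul_of_nonneg_left h1 (abs_nonneg _)
      _ = M / n ! * ε^(n+1) * (‖t‖^(n+1) * |K t|) := by rw [h2]; ring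
      _ ≤ M / n ! * ε^(n+1) * g t := by
          refine mul_le_mul_of_nonneg_left ?_ (by positivity)
          rw [hg]
          exact mul_le_mul_of_nonneg_right (myNormPowLe hd t) (abs_nonneg _)
  have hnorm : ‖∫ t, K t * (f (x - ε • t) - P t)‖ ≤ ∫ t, M / n ! * ε^(n+1) * g t :=
    norm_integral_le_of_norm_le (hg_int.const_mul _) (ae_of_all _ hbound)
  rw [integral_const_mul] at hnorm
  calc |∫ t, K t * (f (x - ε • t) - P t)| ≤ M / n ! * ε^(n+1) * ∫ t, g t := by
        rw [← Real.norm_eq_abs]; exact hnorm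
    _ = (M / n ! * ∫ t, g t) * ε^(n+1) := by ring
    _ = (M / n ! * ∫ t, g t) * h ^ (((n+1 : ℕ) : ℝ)/d) := by rw [hεpow]
end

section
/- Let J ⊆ ℝ^d be measurable, let γ > 0, and let f, g : ℝ^d → [0,∞) be measurable with ∫_J f(x) dx ≤ 1, ∫_J g(x) dx ≤ 1, f(x) ≥ 2γ for all x ∈ J, and sup_{x∈J} |g(x) − f(x)| ≤ γ. Then |∫_J g(x) log g(x) dx − ∫_J f(x) log f(x) dx| ≤ (2/γ + 1/γ² + 1) · sup_{x∈J} |g(x) − f(x)|. -/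
open MeasureTheory Filter Set

lemma aux_abs_log (γ b : ℝ) (hγ : 0 < γ) (hb : γ ≤ b) : |Real.log b| ≤ 1/γ + b := by
  have hb0 : 0 < b := lt_of_lt_of_le hγ hb
  have h1 : Real.log b ≤ b - 1 := Real.log_le_sub_one_of_pos hb0
  have h2 : Real.log b⁻¹ ≤ b⁻¹ - 1 := Real.log_le_sub_one_of_pos (by positivity)
  rw [Real.log_inv] at h2
  have hinv : b⁻¹ ≤ γ⁻¹ := inv_anti₀ hγ hb
  rw [abs_le]
  constructor
  · have : -(b⁻¹ - 1) ≤ Real.log b := by linarith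
    have h3 : (0:ℝ) < 1/γ := by positivity
    rw [one_div]
    nlinarith
  · have : (0:ℝ) < 1/γ := by positivity
    linarith

lemma aux_log_diff (γ a b : ℝ) (hγ : 0 < γ) (ha : γ ≤ a) (hb : γ ≤ b) :
    |Real.log b - Real.log a| ≤ |b - a| / γ := by
  have ha0 : 0 < a := lt_of_lt_of_le hγ ha
  have hb0 : 0 < b := lt_of_lt_of_le hγ hb
  rcases le_total a b with h | h
  · rw [abs_of_nonneg (by linarith : (0:ℝ) ≤ b - a),
      abs_of_nonneg (sub_nonneg.mpr (Real.log_le_log ha0 h))]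
    have := Real.log_le_sub_one_of_pos (show 0 < b/a by positivity)
    rw [Real.log_div (ne_of_gt hb0) (ne_of_gt ha0)] at this
    have h2 : b/a - 1 = (b-a)/a := by field_simp
    rw [h2] at this
    exact this.trans (div_le_div_of_nonneg_left (by linarith) hγ ha)
  · rw [abs_of_nonpos (by linarith : b - a ≤ 0),
      abs_of_nonpos (sub_nonpos.mpr (Real.log_le_log hb0 h))]
    have := Real.log_le_sub_one_of_pos (show 0 < a/b by positivity)
    rw [Real.log_div (ne_of_gt ha0) (ne_of_gt hb0)] at this
    have h2 : a/b - 1 = (a-b)/b := by field_simp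
    rw [h2] at this
    have h3 : (a-b)/b ≤ (a-b)/γ := div_le_div_of_nonneg_left (by linarith) hγ hb
    calc -(Real.log b - Real.log a) = Real.log a - Real.log b := by ring
    _ ≤ (a-b)/b := this
    _ ≤ (a-b)/γ := h3
    _ = -(b-a)/γ := by ring

lemma aux_point (γ a b : ℝ) (hγ : 0 < γ) (ha : γ ≤ a) (hb : γ ≤ b) :
    |b * Real.log b - a * Real.log a| ≤ |b - a| * (1/γ + b + a/γ) := by
  have key : b * Real.log b - a * Real.log a
      = (b - a) * Real.log b + a * (Real.log b - Real.log a) := by ring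
  rw [key]
  have h1 : |(b - a) * Real.log b| ≤ |b - a| * (1/γ + b) := by
    rw [abs_mul]
    exact mul_le_mul_of_nonneg_left (aux_abs_log γ b hγ hb) (abs_nonneg _)
  have h2 : |a * (Real.log b - Real.log a)| ≤ a * (|b - a| / γ) := by
    rw [abs_mul, abs_of_nonneg (by linarith : (0:ℝ) ≤ a)]
    exact mul_le_mul_of_nonneg_left (aux_log_diff γ a b hγ ha hb) (by linarith)
  calc |(b - a) * Real.log b + a * (Real.log b - Real.log a)|
      ≤ |(b - a) * Real.log b| + |a * (Real.log b - Real.log a)| := abs_add_le _ _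
    _ ≤ |b - a| * (1/γ + b) + a * (|b - a| / γ) := add_le_add h1 h2
    _ = |b - a| * (1/γ + b + a/γ) := by ring

/-- Deterministic comparison used in the proof of Theorem 2: if `f ≥ 2γ` on a
measurable set `J`, `∫_J f ≤ 1`, `∫_J g ≤ 1`, and `sup_{x∈J} |g − f| ≤ γ`, then
`|∫_J g log g − ∫_J f log f| ≤ (2/γ + 1/γ² + 1) · sup_{x∈J} |g(x) − f(x)|`. -/
theorem statement8 (d : ℕ) (J : Set (Fin d → ℝ)) (hJ : MeasurableSet J)
    (γ : ℝ) (hγ : 0 < γ)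
    (f g : (Fin d → ℝ) → ℝ)
    (hf_meas : Measurable f) (hg_meas : Measurable g)
    (hf_nonneg : ∀ x, 0 ≤ f x) (hg_nonneg : ∀ x, 0 ≤ g x)
    (hf_int : IntegrableOn f J) (hg_int : IntegrableOn g J)
    (hf_le : ∫ x in J, f x ≤ 1) (hg_le : ∫ x in J, g x ≤ 1)
    (hf_lb : ∀ x ∈ J, 2 * γ ≤ f x)
    (h_close : ∀ x ∈ J, |g x - f x| ≤ γ) :
    |(∫ x in J, g x * Real.log (g x)) - ∫ x in J, f x * Real.log (f x)|
      ≤ (2 / γ + 1 / γ ^ 2 + 1) * ⨆ x : J, |g x - f x| := by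
  rcases eq_empty_or_nonempty J with rfl | ⟨x0, hx0⟩
  · have : IsEmpty (↥(∅ : Set (Fin d → ℝ))) := by simp
    simp [Real.iSup_of_isEmpty]
  -- basic facts
  set M : ℝ := ⨆ x : J, |g x - f x| with hM_def
  have hbdd : BddAbove (Set.range fun x : J => |g x - f x|) := by
    refine ⟨γ, ?_⟩
    rintro _ ⟨x, rfl⟩
    exact h_close x x.2
  have hM_le : ∀ x ∈ J, |g x - f x| ≤ M := fun x hx => le_ciSup hbdd ⟨x, hx⟩
  have hM0 : 0 ≤ M := le_trans (abs_nonneg _) (hM_le x0 hx0)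
  have hf_lb' : ∀ x ∈ J, γ ≤ f x := fun x hx => by have := hf_lb x hx; linarith
  have hg_lb : ∀ x ∈ J, γ ≤ g x := by
    intro x hx
    have h1 := h_close x hx
    have h2 := hf_lb x hx
    have := abs_le.mp h1
    linarith [this.1]
  -- measure of J is finite
  have hμfin : volume J < ⊤ := by
    have h1 : volume.restrict J {x | 2 * γ ≤ f x} < ⊤ :=
      hf_int.measure_ge_lt_top (by linarith : (0:ℝ) < 2 * γ)
    have h2 : volume J = volume.restrict J J := by
      rw [Measure.restrict_apply hJ, Set.inter_self]
    rw [h2]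
    exact lt_of_le_of_lt (measure_mono fun x hx => hf_lb x hx) h1
  have hμ := hμfin.ne
  have hμ_le : (volume J).toReal ≤ 1 / (2 * γ) := by
    have h1 : 2 * γ * (volume J).toReal ≤ ∫ x in J, f x :=
      setIntegral_ge_of_const_le_real hJ hμ hf_lb hf_int
    rw [le_div_iff₀ (by linarith : (0:ℝ) < 2 * γ)]
    nlinarith
  -- pointwise bound on J
  have hpt : ∀ x ∈ J, |g x * Real.log (g x) - f x * Real.log (f x)|
      ≤ M / γ + M * g x + M / γ * f x := by
    intro x hx
    have h1 := aux_point γ (f x) (g x) hγ (hf_lb' x hx) (hg_lb x hx)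
    have h2 : |g x - f x| * (1/γ + g x + f x/γ) ≤ M * (1/γ + g x + f x/γ) := by
      apply mul_le_mul_of_nonneg_right (hM_le x hx)
      have : 0 ≤ g x := hg_nonneg x
      have : 0 ≤ f x := hf_nonneg x
      positivity
    calc |g x * Real.log (g x) - f x * Real.log (f x)|
        ≤ |g x - f x| * (1/γ + g x + f x/γ) := h1
      _ ≤ M * (1/γ + g x + f x/γ) := h2
      _ = M / γ + M * g x + M / γ * f x := by ring
  -- the bound function is integrable
  have hbound_int : IntegrableOn (fun x => M / γ + M * g x + M / γ * f x) J := by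
    apply Integrable.add
    apply Integrable.add
    · exact (integrableOn_const_iff).mpr (Or.inr hμfin)
    · exact (hg_int.const_mul M)
    · exact (hf_int.const_mul (M / γ))
  -- the difference is integrable on J
  have hdiff_int : IntegrableOn
      (fun x => g x * Real.log (g x) - f x * Real.log (f x)) J := by
    apply Integrable.mono' hbound_int
    · exact ((hg_meas.mul (hg_meas.log)).sub
        (hf_meas.mul (hf_meas.log))).aestronglyMeasurable
    · filter_upwards [ae_restrict_mem hJ] with x hx
      exact hpt x hx
  by_cases hint : IntegrableOn (fun x => f x * Real.log (f x)) J
  · -- both integrable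
    have hgint : IntegrableOn (fun x => g x * Real.log (g x)) J := by
      have : (fun x => g x * Real.log (g x))
          = fun x => (g x * Real.log (g x) - f x * Real.log (f x)) + f x * Real.log (f x) := by
        funext x; ring
      rw [this]
      exact hdiff_int.add hint
    rw [← integral_sub hgint hint]
    have h1 : |∫ x in J, (g x * Real.log (g x) - f x * Real.log (f x))|
        ≤ ∫ x in J, (M / γ + M * g x + M / γ * f x) := by
      rw [← Real.norm_eq_abs]
      refine (norm_integral_le_integral_norm _).trans ?_
      apply integral_mono_of_nonneg
      · filter_upwards with x using norm_nonneg _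
      · exact hbound_int
      · filter_upwards [ae_restrict_mem hJ] with x hx
        exact hpt x hx
    have h2 : ∫ x in J, (M / γ + M * g x + M / γ * f x)
        = (volume J).toReal * (M / γ) + M * (∫ x in J, g x) + M / γ * ∫ x in J, f x := by
      have hc : IntegrableOn (fun _ : (Fin d → ℝ) => M / γ) J :=
        (integrableOn_const_iff).mpr (Or.inr hμfin)
      have hA : IntegrableOn (fun x => M / γ + M * g x) J := hc.add (hg_int.const_mul M)
      rw [integral_add hA (hf_int.const_mul (M / γ)),
        integral_add hc (hg_int.const_mul M),
        setIntegral_const, integral_const_mul, integral_const_mul, smul_eq_mul, measureReal_def]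
    have hIg0 : 0 ≤ ∫ x in J, g x := setIntegral_nonneg hJ fun x _ => hg_nonneg x
    have hIf0 : 0 ≤ ∫ x in J, f x := setIntegral_nonneg hJ fun x _ => hf_nonneg x
    have e1 : (volume J).toReal * (M / γ) ≤ 1 / (2 * γ) * (M / γ) :=
      mul_le_mul_of_nonneg_right hμ_le (by positivity)
    have e2 : M * (∫ x in J, g x) ≤ M * 1 := mul_le_mul_of_nonneg_left hg_le hM0
    have e3 : M / γ * (∫ x in J, f x) ≤ M / γ * 1 :=
      mul_le_mul_of_nonneg_left hf_le (by positivity)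
    have key : (2 / γ + 1 / γ ^ 2 + 1) * M - (1 / (2 * γ) * (M / γ) + M * 1 + M / γ * 1)
        = M * (1 / γ + 1 / (2 * γ ^ 2)) := by
      field_simp
      ring
    have hnn : 0 ≤ M * (1 / γ + 1 / (2 * γ ^ 2)) :=
      mul_nonneg hM0 (by positivity)
    calc |∫ x in J, (g x * Real.log (g x) - f x * Real.log (f x))|
        ≤ (volume J).toReal * (M / γ) + M * (∫ x in J, g x) + M / γ * ∫ x in J, f x :=
          h2 ▸ h1
      _ ≤ (2 / γ + 1 / γ ^ 2 + 1) * M := by nlinarith [e1, e2, e3, key, hnn]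
  · -- neither integrable: both integrals are 0
    have hgint : ¬ IntegrableOn (fun x => g x * Real.log (g x)) J := by
      intro hgi
      apply hint
      have : (fun x => f x * Real.log (f x))
          = fun x => g x * Real.log (g x) - (g x * Real.log (g x) - f x * Real.log (f x)) := by
        funext x; ring
      rw [this]
      exact hgi.sub hdiff_int
    rw [integral_undef hint, integral_undef hgint]
    simp only [sub_zero, abs_zero]
    have : 0 < 2 / γ + 1 / γ ^ 2 + 1 := by positivity
    positivity
end
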